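/- arXiv:1302.3811 — 2 statements merged into one kernel-verified Lean document; each statement's English description precedes it below -/
import Mathlib

section
/- Let M_1, …, M_k be matroids on the same finite ground set E. Suppose there exist sets V_1, …, V_k ⊆ E such that V_i is independent in M_i for each i and V_1 ∪ … ∪ V_k = E. Then Alice wins the generalized indicated coloring game on M_1, …, M_k from the everywhere-uncolored position. -/
open Function

/-- A partial coloring `c` (with `none` meaning "uncolored") of the ground set `E` is proper
for the family of matroids `M` when, for each color `j`, the elements of `E` colored `j`
form an independent set of the matroid `M j`. -/
def ProperColoring {α : Type*} {k : ℕ} (M : Fin k → Matroid α) (E : Set α)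
    (c : α → Option (Fin k)) : Prop :=
  ∀ j : Fin k, (M j).Indep {x ∈ E | c x = some j}

/-- Coloring one more element strictly decreases the number of uncolored elements. -/
theorem uncolored_update_lt {α β : Type*} [DecidableEq α] {E : Set α} (hE : E.Finite)
    {c : α → Option β} {e : α} (he : e ∈ E) (hce : c e = none) (j : β) :
    {x ∈ E | Function.update c e (some j) x = none}.ncard < {x ∈ E | c x = none}.ncard := by
  apply Set.ncard_lt_ncard
  · constructor
    · rintro x ⟨hxE, hxc⟩
      refine ⟨hxE, ?_⟩
      rcases eq_or_ne x e with rfl | hne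
      · simp [Function.update_self] at hxc
      · rwa [Function.update_of_ne hne] at hxc
    · intro hsub
      have := hsub ⟨he, hce⟩
      simp [Function.update_self] at this
  · exact hE.subset (Set.sep_subset _ _)

/-- Alice wins the generalized indicated coloring game on the matroids `M 0, …, M (k-1)`
(all on the finite ground set `E`) from the partial coloring `c`, defined by recursion on
the number of uncolored elements: either every element of `E` is colored, or there is an
uncolored element `e ∈ E` such that (i) at least one color can be assigned to `e` keeping
the coloring proper, and (ii) for every color whose assignment to `e` keeps the coloring
proper, Alice wins from the extended coloring. -/
def AliceWins {α : Type*} [DecidableEq α] {k : ℕ} (M : Fin k → Matroid α) (E : Set α)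
    (hE : E.Finite) (c : α → Option (Fin k)) : Prop :=
  (∀ e ∈ E, c e ≠ none) ∨
    ∃ e, ∃ _ : e ∈ E, ∃ _ : c e = none,
      (∃ j : Fin k, ProperColoring M E (Function.update c e (some j))) ∧
      ∀ j : Fin k, ProperColoring M E (Function.update c e (some j)) →
        AliceWins M E hE (Function.update c e (some j))
termination_by {x ∈ E | c x = none}.ncard
decreasing_by all_goals (apply uncolored_update_lt <;> assumption)

namespace IndicatedGame

open Set

variable {α : Type*}

/-! ### A finite rank function for matroids -/

noncomputable def rk (N : Matroid α) (X : Set α) : ℕ :=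
  (N.exists_isBasis' X).choose.ncard

lemma rk_eq_of_basis' {N : Matroid α} {J X : Set α} (h : N.IsBasis' J X) :
    rk N X = J.ncard := by
  have h₀ := (N.exists_isBasis' X).choose_spec
  simpa [rk, Set.ncard_def] using congrArg ENat.toNat (h₀.encard_eq_encard h)

lemma indep_rk_eq {N : Matroid α} {I : Set α} (h : N.Indep I) : rk N I = I.ncard :=
  rk_eq_of_basis' h.isBasis_self.isBasis'

lemma ncard_le_rk_of_indep {N : Matroid α} {I X : Set α} (hI : N.Indep I) (hIX : I ⊆ X)
    (hX : X.Finite) : I.ncard ≤ rk N X := by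
  obtain ⟨J, hJ, hIJ⟩ := hI.subset_isBasis'_of_subset hIX
  rw [rk_eq_of_basis' hJ]
  exact Set.ncard_le_ncard hIJ (hX.subset hJ.subset)

lemma rk_le_ncard (N : Matroid α) (X : Set α) (hX : X.Finite) : rk N X ≤ X.ncard := by
  obtain ⟨J, hJ⟩ := N.exists_isBasis' X
  rw [rk_eq_of_basis' hJ]
  exact Set.ncard_le_ncard hJ.subset hX

lemma rk_mono (N : Matroid α) {X Y : Set α} (hXY : X ⊆ Y) (hY : Y.Finite) :
    rk N X ≤ rk N Y := by
  obtain ⟨J, hJ⟩ := N.exists_isBasis' X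
  rw [rk_eq_of_basis' hJ]
  exact ncard_le_rk_of_indep hJ.indep (hJ.subset.trans hXY) hY

lemma indep_of_rk_eq_ncard {N : Matroid α} {X : Set α} (hX : X.Finite) (hXE : X ⊆ N.E)
    (h : rk N X = X.ncard) : N.Indep X := by
  obtain ⟨J, hJ⟩ := N.exists_isBasis X hXE
  have hJ' := rk_eq_of_basis' hJ.isBasis'
  have : J = X := Set.eq_of_subset_of_ncard_le hJ.subset (by omega) hX
  exact this ▸ hJ.indep

lemma rk_submod (N : Matroid α) (X Y : Set α) (hX : X.Finite) (hY : Y.Finite) :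
    rk N (X ∪ Y) + rk N (X ∩ Y) ≤ rk N X + rk N Y := by
  obtain ⟨I, hI⟩ := N.exists_isBasis' (X ∩ Y)
  obtain ⟨J, hJ, hIJ⟩ := hI.indep.subset_isBasis'_of_subset
    (hI.subset.trans (Set.inter_subset_left.trans Set.subset_union_left))
  have hJfin : J.Finite := (hX.union hY).subset hJ.subset
  rw [rk_eq_of_basis' hI, rk_eq_of_basis' hJ]
  have h1 : (J ∩ X).ncard ≤ rk N X :=
    ncard_le_rk_of_indep (hJ.indep.subset Set.inter_subset_left) Set.inter_subset_right hX
  have h2 : (J ∩ Y).ncard ≤ rk N Y :=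
    ncard_le_rk_of_indep (hJ.indep.subset Set.inter_subset_left) Set.inter_subset_right hY
  have h3 : (J ∩ X) ∪ (J ∩ Y) = J := by
    rw [← Set.inter_union_distrib_left, Set.inter_eq_left]; exact hJ.subset
  have h4 : (J ∩ X) ∩ (J ∩ Y) = J ∩ (X ∩ Y) := by
    ext x; simp [Set.mem_inter_iff]; tauto
  have h5 := Set.ncard_union_add_ncard_inter (J ∩ X) (J ∩ Y)
    (hJfin.subset Set.inter_subset_left) (hJfin.subset Set.inter_subset_left)
  rw [h3, h4] at h5
  have h6 : I.ncard ≤ (J ∩ (X ∩ Y)).ncard :=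
    Set.ncard_le_ncard (Set.subset_inter hIJ hI.subset) (hJfin.inter_of_left _)
  omega

/-! ### The coloring game set-up -/

section Game

variable [DecidableEq α] {k : ℕ}
set_option linter.unusedSectionVars false

def cls (E : Set α) (c : α → Option (Fin k)) (i : Fin k) : Set α := {x ∈ E | c x = some i}

def unc (E : Set α) (c : α → Option (Fin k)) : Set α := {x ∈ E | c x = none}

noncomputable def Kc (E : Set α) (c : α → Option (Fin k)) : ℕ := ∑ i, (cls E c i).ncard

noncomputable def Fc (M : Fin k → Matroid α) (E : Set α) (c : α → Option (Fin k))
    (S : Set α) : ℕ := ∑ i, rk (M i) (S ∪ cls E c i)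

def Feas (M : Fin k → Matroid α) (E : Set α) (c : α → Option (Fin k)) : Prop :=
  ∀ S ⊆ unc E c, S.ncard + Kc E c ≤ Fc M E c S

lemma mem_unc {E : Set α} {c : α → Option (Fin k)} {x : α} :
    x ∈ unc E c ↔ x ∈ E ∧ c x = none := Iff.rfl

lemma cls_subset (E : Set α) (c : α → Option (Fin k)) (i : Fin k) : cls E c i ⊆ E :=
  fun _ h => h.1

lemma unc_subset (E : Set α) (c : α → Option (Fin k)) : unc E c ⊆ E := fun _ h => h.1

lemma not_mem_cls {E : Set α} {c : α → Option (Fin k)} {e : α} (hce : c e = none) (i : Fin k) :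
    e ∉ cls E c i := fun h => by simp [cls, hce] at h

lemma unc_disjoint_cls {E : Set α} {c : α → Option (Fin k)} {x : α} (i : Fin k)
    (hx : x ∈ unc E c) : x ∉ cls E c i := fun h => by
  rw [unc, Set.mem_setOf_eq] at hx
  rw [cls, Set.mem_setOf_eq] at h
  rw [hx.2] at h; exact Option.some_ne_none _ h.2.symm

lemma cls_update_self {E : Set α} {c : α → Option (Fin k)} {e : α} (he : e ∈ E) (j : Fin k) :
    cls E (Function.update c e (some j)) j = insert e (cls E c j) := by
  ext x
  rcases eq_or_ne x e with rfl | hne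
  · simp [cls, he, Function.update_self]
  · simp [cls, Function.update_of_ne hne, hne]

lemma cls_update_ne {E : Set α} {c : α → Option (Fin k)} {e : α} (hce : c e = none)
    {i j : Fin k} (hij : i ≠ j) :
    cls E (Function.update c e (some j)) i = cls E c i := by
  ext x
  simp only [cls, Set.mem_setOf_eq]
  rcases eq_or_ne x e with rfl | hne
  · rw [Function.update_self, hce]
    constructor
    · rintro ⟨hx, h⟩
      injection h with h'
      exact absurd h'.symm hij
    · rintro ⟨hx, h⟩
      exact absurd h.symm (Option.some_ne_none _)
  · rw [Function.update_of_ne hne]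

lemma unc_update {E : Set α} {c : α → Option (Fin k)} {e : α} (j : Fin k) :
    unc E (Function.update c e (some j)) = unc E c \ {e} := by
  ext x
  rcases eq_or_ne x e with rfl | hne
  · simp [unc, Function.update_self]
  · simp [unc, Function.update_of_ne hne, hne]

lemma sum_swap_at {f g : Fin k → ℕ} {j : Fin k} (h : ∀ i, i ≠ j → f i = g i) :
    (∑ i, f i) + g j = (∑ i, g i) + f j := by
  classical
  have hf := Finset.sum_erase_add Finset.univ f (Finset.mem_univ j)
  have hg := Finset.sum_erase_add Finset.univ g (Finset.mem_univ j)
  have hfg : ∑ i ∈ Finset.univ.erase j, f i = ∑ i ∈ Finset.univ.erase j, g i :=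
    Finset.sum_congr rfl fun i hi => h i (Finset.ne_of_mem_erase hi)
  omega

lemma Kc_update {E : Set α} (hE : E.Finite) {c : α → Option (Fin k)} {e : α}
    (he : e ∈ E) (hce : c e = none) (j : Fin k) :
    Kc E (Function.update c e (some j)) = Kc E c + 1 := by
  have key : (∑ i, (cls E (Function.update c e (some j)) i).ncard) + (cls E c j).ncard =
      (∑ i, (cls E c i).ncard) + (cls E (Function.update c e (some j)) j).ncard :=
    sum_swap_at (f := fun i => (cls E (Function.update c e (some j)) i).ncard)
      (g := fun i => (cls E c i).ncard) (j := j)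
      (fun i hij => congrArg Set.ncard (cls_update_ne hce hij))
  have h2 : (cls E (Function.update c e (some j)) j).ncard = (cls E c j).ncard + 1 := by
    rw [cls_update_self he j,
      Set.ncard_insert_of_notMem (not_mem_cls hce j) (hE.subset (cls_subset E c j))]
  unfold Kc
  omega

variable {M : Fin k → Matroid α} {E : Set α}

lemma proper_cls (hc : ProperColoring M E c) (i : Fin k) : (M i).Indep (cls E c i) := hc i

lemma proper_update_of_indep {c : α → Option (Fin k)} (hc : ProperColoring M E c) {e : α}
    (he : e ∈ E) (hce : c e = none) {j : Fin k}
    (hind : (M j).Indep (insert e (cls E c j))) :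
    ProperColoring M E (Function.update c e (some j)) := by
  intro i
  show (M i).Indep (cls E (Function.update c e (some j)) i)
  rcases eq_or_ne i j with rfl | hij
  · rw [cls_update_self he]; exact hind
  · rw [cls_update_ne hce hij]; exact hc i

lemma indep_of_proper_update {c : α → Option (Fin k)} {e : α}
    (he : e ∈ E) {j : Fin k}
    (hp : ProperColoring M E (Function.update c e (some j))) :
    (M j).Indep (insert e (cls E c j)) := by
  have := hp j
  rwa [show {x ∈ E | Function.update c e (some j) x = some j} =
    cls E (Function.update c e (some j)) j from rfl, cls_update_self he j] at this

lemma exists_admissible (hE : E.Finite) (hg : ∀ i, (M i).E = E)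
    {c : α → Option (Fin k)} (hc : ProperColoring M E c) (hfeas : Feas M E c)
    {e : α} (he : e ∈ unc E c) : ∃ j, (M j).Indep (insert e (cls E c j)) := by
  by_contra hno
  push_neg at hno
  have hb : ∀ i, rk (M i) ({e} ∪ cls E c i) ≤ (cls E c i).ncard := by
    intro i
    rw [Set.singleton_union]
    by_contra hlt
    push_neg at hlt
    have hclsfin : (cls E c i).Finite := hE.subset (cls_subset E c i)
    have hfin : (insert e (cls E c i)).Finite := hclsfin.insert e
    have hle := rk_le_ncard (M i) (insert e (cls E c i)) hfin
    have hcard : (insert e (cls E c i)).ncard = (cls E c i).ncard + 1 :=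
      Set.ncard_insert_of_notMem (not_mem_cls he.2 i) hclsfin
    refine hno i (indep_of_rk_eq_ncard hfin ?_ (by omega))
    rw [hg i]
    exact Set.insert_subset he.1 (cls_subset E c i)
  have h1 := hfeas {e} (Set.singleton_subset_iff.2 he)
  rw [Set.ncard_singleton] at h1
  have h2 : Fc M E c {e} ≤ Kc E c := Finset.sum_le_sum (fun i _ => hb i)
  omega

/-- The key step lemma: Alice can point at an element keeping feasibility whatever
proper color the adversary chooses. -/
lemma step (hE : E.Finite) (hg : ∀ i, (M i).E = E)
    {c : α → Option (Fin k)} (hc : ProperColoring M E c) (hfeas : Feas M E c)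
    (hne : (unc E c).Nonempty) :
    ∃ e ∈ unc E c, (∃ j, ProperColoring M E (Function.update c e (some j))) ∧
      ∀ j, ProperColoring M E (Function.update c e (some j)) →
        Feas M E (Function.update c e (some j)) := by
  classical
  -- a "good" element: no tight set avoiding it can absorb it in an admissible color
  have main : ∃ e ∈ unc E c, ∀ S : Set α, S ⊆ unc E c \ {e} →
      S.ncard + Kc E c = Fc M E c S → ∀ j, (M j).Indep (insert e (cls E c j)) →
      rk (M j) (insert e (S ∪ cls E c j)) = rk (M j) (S ∪ cls E c j) → False := by
    have hins_rk : ∀ (e : α), e ∈ unc E c → ∀ j, (M j).Indep (insert e (cls E c j)) →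
        rk (M j) (insert e (cls E c j)) = (cls E c j).ncard + 1 := by
      intro e he j hind
      rw [indep_rk_eq hind,
        Set.ncard_insert_of_notMem (not_mem_cls he.2 j) (hE.subset (cls_subset E c j))]
    by_cases hT : ∃ S : Set α, S ⊆ unc E c ∧ S.Nonempty ∧ S.ncard + Kc E c = Fc M E c S
    · -- there is a nonempty tight set: take one of minimal cardinality
      have hex : ∃ n : ℕ, ∃ S : Set α,
          (S ⊆ unc E c ∧ S.Nonempty ∧ S.ncard + Kc E c = Fc M E c S) ∧ S.ncard = n := by
        obtain ⟨S₀, h₀⟩ := hT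
        exact ⟨S₀.ncard, S₀, h₀, rfl⟩
      obtain ⟨A, ⟨hAU, hAne, hAt⟩, hAcard⟩ := Nat.find_spec hex
      have hAmin : ∀ B : Set α, B ⊆ unc E c → B.Nonempty →
          B.ncard + Kc E c = Fc M E c B → A.ncard ≤ B.ncard := by
        intro B h1 h2 h3
        rw [hAcard]
        exact Nat.find_le ⟨B, ⟨h1, h2, h3⟩, rfl⟩
      obtain ⟨e, heA⟩ := hAne
      have heU : e ∈ unc E c := hAU heA
      refine ⟨e, heU, ?_⟩
      intro S hSU hSt j hind hbad
      have hSU' : S ⊆ unc E c := hSU.trans Set.diff_subset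
      have hSfin : S.Finite := hE.subset (hSU'.trans (unc_subset E c))
      have hAfin : A.Finite := hE.subset (hAU.trans (unc_subset E c))
      have hclsfin : ∀ i, (cls E c i).Finite := fun i => hE.subset (cls_subset E c i)
      have hSclsfin : ∀ i, (S ∪ cls E c i).Finite := fun i => hSfin.union (hclsfin i)
      have hAclsfin : ∀ i, (A ∪ cls E c i).Finite := fun i => hAfin.union (hclsfin i)
      have heS : e ∉ S := fun h => (hSU h).2 rfl
      -- per-color submodularity for the pair (S, A)
      have hsub : ∀ i, rk (M i) ((S ∪ A) ∪ cls E c i) + rk (M i) ((S ∩ A) ∪ cls E c i) ≤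
          rk (M i) (S ∪ cls E c i) + rk (M i) (A ∪ cls E c i) := by
        intro i
        have h := rk_submod (M i) (S ∪ cls E c i) (A ∪ cls E c i) (hSclsfin i) (hAclsfin i)
        have h1 : (S ∪ cls E c i) ∪ (A ∪ cls E c i) = (S ∪ A) ∪ cls E c i := by
          ext x; simp only [Set.mem_union]; tauto
        have h2 : (S ∪ cls E c i) ∩ (A ∪ cls E c i) = (S ∩ A) ∪ cls E c i := by
          ext x; simp only [Set.mem_union, Set.mem_inter_iff]; tauto
        rwa [h1, h2] at h
      have e1 : (∑ i, (rk (M i) ((S ∪ A) ∪ cls E c i) + rk (M i) ((S ∩ A) ∪ cls E c i))) =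
          Fc M E c (S ∪ A) + Fc M E c (S ∩ A) := by
        rw [Fc, Fc, ← Finset.sum_add_distrib]
      have e2 : (∑ i, (rk (M i) (S ∪ cls E c i) + rk (M i) (A ∪ cls E c i))) =
          Fc M E c S + Fc M E c A := by
        rw [Fc, Fc, ← Finset.sum_add_distrib]
      have hsumle : Fc M E c (S ∪ A) + Fc M E c (S ∩ A) ≤ Fc M E c S + Fc M E c A := by
        rw [← e1, ← e2]
        exact Finset.sum_le_sum fun i _ => hsub i
      have hfeas1 := hfeas (S ∪ A) (Set.union_subset hSU' hAU)
      have hfeas2 := hfeas (S ∩ A) (Set.inter_subset_left.trans hSU')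
      have hcardeq := Set.ncard_union_add_ncard_inter S A hSfin hAfin
      -- the intersection is tight, hence empty by minimality of A
      have htint : (S ∩ A).ncard + Kc E c = Fc M E c (S ∩ A) := by omega
      have hSA : S ∩ A = ∅ := by
        rcases (S ∩ A).eq_empty_or_nonempty with h | h
        · exact h
        · exfalso
          have hss : S ∩ A ⊂ A := by
            constructor
            · exact Set.inter_subset_right
            · intro hAS
              exact heS (hAS heA).1
          have hlt : (S ∩ A).ncard < A.ncard := Set.ncard_lt_ncard hss hAfin
          exact absurd (hAmin (S ∩ A) (Set.inter_subset_left.trans hSU') h htint) (by omega)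
      -- per-color equality for the pair (S, A)
      have hsumeq : (∑ i, (rk (M i) ((S ∪ A) ∪ cls E c i) + rk (M i) ((S ∩ A) ∪ cls E c i))) =
          (∑ i, (rk (M i) (S ∪ cls E c i) + rk (M i) (A ∪ cls E c i))) := by
        rw [e1, e2]
        omega
      have hstar := (Finset.sum_eq_sum_iff_of_le (fun i _ => hsub i)).1 hsumeq j
        (Finset.mem_univ j)
      rw [hSA, Set.empty_union, indep_rk_eq (proper_cls hc j)] at hstar
      -- final submodularity application
      have hfs := rk_submod (M j) (insert e (S ∪ cls E c j)) (A ∪ cls E c j)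
        ((hSclsfin j).insert e) (hAclsfin j)
      have hXuY : insert e (S ∪ cls E c j) ∪ (A ∪ cls E c j) = (S ∪ A) ∪ cls E c j := by
        ext x
        simp only [Set.mem_insert_iff, Set.mem_union]
        constructor
        · rintro ((rfl | hx | hx) | hx | hx)
          · exact Or.inl (Or.inr heA)
          · exact Or.inl (Or.inl hx)
          · exact Or.inr hx
          · exact Or.inl (Or.inr hx)
          · exact Or.inr hx
        · rintro ((hx | hx) | hx)
          · exact Or.inl (Or.inr (Or.inl hx))
          · exact Or.inr (Or.inl hx)
          · exact Or.inr (Or.inr hx)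
      have hXiY : insert e (S ∪ cls E c j) ∩ (A ∪ cls E c j) = insert e (cls E c j) := by
        ext x
        simp only [Set.mem_inter_iff, Set.mem_insert_iff, Set.mem_union]
        constructor
        · rintro ⟨rfl | hx | hx, hy⟩
          · exact Or.inl rfl
          · rcases hy with hy | hy
            · exact absurd (Set.mem_inter hx hy) (by rw [hSA]; exact Set.notMem_empty x)
            · exact absurd hy (unc_disjoint_cls j (hSU' hx))
          · exact Or.inr hx
        · rintro (rfl | hx)
          · exact ⟨Or.inl rfl, Or.inl heA⟩
          · exact ⟨Or.inr (Or.inr hx), Or.inr hx⟩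
      rw [hXuY, hXiY, hbad, hins_rk e heU j hind] at hfs
      omega
    · -- no nonempty tight set
      obtain ⟨e, heU⟩ := hne
      refine ⟨e, heU, ?_⟩
      intro S hSU hSt j hind hbad
      have hSe : S = ∅ := by
        rcases S.eq_empty_or_nonempty with h | h
        · exact h
        · exact absurd ⟨S, hSU.trans Set.diff_subset, h, hSt⟩ hT
      subst hSe
      rw [Set.empty_union] at hbad
      rw [hins_rk e heU j hind, indep_rk_eq (proper_cls hc j)] at hbad
      omega
  obtain ⟨e, heU, hgood⟩ := main
  have heE : e ∈ E := heU.1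
  have hceN : c e = none := heU.2
  obtain ⟨j₀, hj₀⟩ := exists_admissible hE hg hc hfeas heU
  refine ⟨e, heU, ⟨j₀, proper_update_of_indep hc heE hceN hj₀⟩, ?_⟩
  intro j hpj
  have hind : (M j).Indep (insert e (cls E c j)) := indep_of_proper_update heE hpj
  intro S hS'
  rw [unc_update] at hS'
  by_contra hcon
  push_neg at hcon
  rw [Kc_update hE heE hceN] at hcon
  have hswap : Fc M E (Function.update c e (some j)) S + rk (M j) (S ∪ cls E c j) =
      Fc M E c S + rk (M j) (S ∪ cls E (Function.update c e (some j)) j) :=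
    sum_swap_at (f := fun i => rk (M i) (S ∪ cls E (Function.update c e (some j)) i))
      (g := fun i => rk (M i) (S ∪ cls E c i))
      (fun i hij => congrArg (rk (M i)) (by rw [cls_update_ne hceN hij]))
  have hrw : S ∪ cls E (Function.update c e (some j)) j = insert e (S ∪ cls E c j) := by
    rw [cls_update_self heE j, Set.union_insert]
  rw [hrw] at hswap
  have hSfin : (S ∪ cls E c j).Finite :=
    (hE.subset ((hS'.trans Set.diff_subset).trans (unc_subset E c))).union
      (hE.subset (cls_subset E c j))
  have hmono : rk (M j) (S ∪ cls E c j) ≤ rk (M j) (insert e (S ∪ cls E c j)) :=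
    rk_mono (M j) (Set.subset_insert e _) (hSfin.insert e)
  have hfS := hfeas S (hS'.trans Set.diff_subset)
  have htight : S.ncard + Kc E c = Fc M E c S := by omega
  have hbad : rk (M j) (insert e (S ∪ cls E c j)) = rk (M j) (S ∪ cls E c j) := by omega
  exact hgood S hS' htight j hind hbad

end Game

end IndicatedGame

namespace IndicatedGame

section Game
variable {α : Type*} [DecidableEq α] {k : ℕ}
set_option linter.unusedSectionVars false
variable {M : Fin k → Matroid α} {E : Set α}

lemma ncard_le_sum_inter {V : Fin k → Set α} :
    ∀ (s : Finset (Fin k)) (S : Set α), S.Finite → (S ⊆ ⋃ i ∈ s, V i) →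
      S.ncard ≤ ∑ i ∈ s, (V i ∩ S).ncard := by
  intro s
  induction s using Finset.induction_on with
  | empty =>
    intro S _ h
    simp only [Finset.notMem_empty, Set.iUnion_of_empty, Set.iUnion_empty,
      Set.subset_empty_iff] at h
    simp [h]
  | @insert a s ha ih =>
    intro S hSfin hsub
    have hsplit : S = (V a ∩ S) ∪ (S \ V a) := by
      ext x; simp only [Set.mem_union, Set.mem_inter_iff, Set.mem_diff]; tauto
    have h1 : S \ V a ⊆ ⋃ i ∈ s, V i := by
      intro x hx
      have hmem := hsub hx.1
      simp only [Set.mem_iUnion] at hmem ⊢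
      obtain ⟨i, hi, hxi⟩ := hmem
      rcases Finset.mem_insert.1 hi with rfl | hi'
      · exact absurd hxi hx.2
      · exact ⟨i, hi', hxi⟩
    have h2 := ih (S \ V a) hSfin.diff h1
    have h3 : ∑ i ∈ s, (V i ∩ (S \ V a)).ncard ≤ ∑ i ∈ s, (V i ∩ S).ncard :=
      Finset.sum_le_sum fun i _ =>
        Set.ncard_le_ncard (Set.inter_subset_inter_right _ Set.diff_subset)
          (hSfin.inter_of_right _)
    have h4 : S.ncard ≤ (V a ∩ S).ncard + (S \ V a).ncard := by
      conv_lhs => rw [hsplit]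
      exact Set.ncard_union_le _ _
    rw [Finset.sum_insert ha]
    omega

lemma proper_init : ProperColoring M E (fun _ => none) := by
  intro j
  have h : {x ∈ E | (fun _ : α => (none : Option (Fin k))) x = some j} = ∅ := by
    ext x; simp
  rw [h]
  exact (M j).empty_indep

lemma feas_init (hE : E.Finite) {V : Fin k → Set α} (hV : ∀ i, (M i).Indep (V i))
    (hcover : ⋃ i, V i = E) : Feas M E (fun _ => none) := by
  intro S hS
  have huncE : unc E (fun _ : α => (none : Option (Fin k))) = E := by
    ext x; simp [unc]
  have hSE : S ⊆ E := hS.trans (huncE.subset)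
  have hcls : ∀ i : Fin k, cls E (fun _ : α => (none : Option (Fin k))) i = ∅ := by
    intro i; ext x; simp [cls]
  have hK : Kc E (fun _ : α => (none : Option (Fin k))) = 0 := by
    simp [Kc, hcls]
  have hcov' : S ⊆ ⋃ i ∈ (Finset.univ : Finset (Fin k)), V i := by
    intro x hx
    have hx2 : x ∈ ⋃ i, V i := by rw [hcover]; exact hSE hx
    simp only [Set.mem_iUnion] at hx2 ⊢
    obtain ⟨i, hi⟩ := hx2
    exact ⟨i, Finset.mem_univ i, hi⟩
  have h1 := ncard_le_sum_inter Finset.univ S (hE.subset hSE) hcov'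
  have h2 : ∑ i, (V i ∩ S).ncard ≤ Fc M E (fun _ => none) S := by
    refine Finset.sum_le_sum fun i _ => ?_
    rw [show S ∪ cls E (fun _ : α => (none : Option (Fin k))) i = S by
      rw [hcls i, Set.union_empty]]
    exact ncard_le_rk_of_indep ((hV i).subset Set.inter_subset_left)
      Set.inter_subset_right (hE.subset hSE)
  rw [hK]
  omega

lemma aliceWins_of_feas (hE : E.Finite) (hg : ∀ i, (M i).E = E) :
    ∀ n (c : α → Option (Fin k)), (unc E c).ncard = n → ProperColoring M E c →
      Feas M E c → AliceWins M E hE c := by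
  intro n
  induction n using Nat.strong_induction_on with
  | _ n ih =>
    intro c hn hc hfeas
    rw [AliceWins]
    by_cases hall : ∀ e ∈ E, c e ≠ none
    · exact Or.inl hall
    · right
      have hne : (unc E c).Nonempty := by
        push_neg at hall
        obtain ⟨e, he, hce⟩ := hall
        exact ⟨e, he, hce⟩
      obtain ⟨e, heU, hadm, hmaint⟩ := step hE hg hc hfeas hne
      refine ⟨e, heU.1, heU.2, hadm, ?_⟩
      intro j hpj
      have hlt : (unc E (Function.update c e (some j))).ncard < n := by
        rw [← hn]
        exact uncolored_update_lt hE heU.1 heU.2 j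
      exact ih _ hlt _ rfl hpj (hmaint j hpj)

end Game

end IndicatedGame


/-- If `E` is covered by sets `V i` independent in the respective matroids `M i`, then
Alice wins the generalized indicated coloring game from the everywhere-uncolored position. -/
theorem aliceWins_of_cover {α : Type*} [DecidableEq α] {k : ℕ} (M : Fin k → Matroid α)
    (E : Set α) (hE : E.Finite) (hground : ∀ i, (M i).E = E)
    (V : Fin k → Set α) (hV : ∀ i, (M i).Indep (V i)) (hcover : ⋃ i, V i = E) :
    AliceWins M E hE (fun _ => none) := by
  exact IndicatedGame.aliceWins_of_feas hE hground _ _ rfl IndicatedGame.proper_init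
    (IndicatedGame.feas_init hE hV hcover)
end

section
/- Let M_1, …, M_k be matroids on the same finite ground set E. Suppose there exist sets V_1, …, V_k ⊆ E such that V_i is independent in M_i for each i and V_1 ∪ … ∪ V_k = E. Then Alice wins the generalized modified indicated coloring game on M_1, …, M_k from the everywhere-uncolored position. -/
open Function

open Set

namespace Matroid

variable {α : Type*} {N : Matroid α} {I X Y : Set α} {e : α}

/-- The rank of a set in a matroid, as the cardinality of any maximal independent subset. -/
noncomputable def mrk (N : Matroid α) (X : Set α) : ℕ∞ := (N.exists_isBasis' X).choose.encard

theorem IsBasis'.encard_eq_mrk (h : N.IsBasis' I X) : I.encard = N.mrk X :=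
  h.encard_eq_encard (N.exists_isBasis' X).choose_spec

theorem IsBasis.encard_eq_mrk (h : N.IsBasis I X) : I.encard = N.mrk X :=
  h.isBasis'.encard_eq_mrk

theorem exists_basis'_mrk (N : Matroid α) (X : Set α) :
    ∃ I, N.IsBasis' I X ∧ I.encard = N.mrk X :=
  ⟨_, (N.exists_isBasis' X).choose_spec, rfl⟩

theorem Indep.mrk_eq (h : N.Indep I) : N.mrk I = I.encard :=
  (h.isBasis_self.encard_eq_mrk).symm

theorem mrk_mono (N : Matroid α) (hXY : X ⊆ Y) : N.mrk X ≤ N.mrk Y := by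
  obtain ⟨I, hI, hIe⟩ := N.exists_basis'_mrk X
  obtain ⟨J, hJ, hIJ⟩ := hI.indep.subset_isBasis'_of_subset (hI.subset.trans hXY)
  rw [← hIe, ← hJ.encard_eq_mrk]
  exact encard_le_encard hIJ

theorem mrk_le_encard (N : Matroid α) (X : Set α) : N.mrk X ≤ X.encard := by
  obtain ⟨I, hI, hIe⟩ := N.exists_basis'_mrk X
  rw [← hIe]; exact encard_le_encard hI.subset

theorem mrk_ne_top_of_finite (N : Matroid α) (hX : X.Finite) : N.mrk X ≠ ⊤ :=
  (lt_of_le_of_lt (N.mrk_le_encard X) (encard_lt_top_iff.2 hX)).ne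

theorem mrk_insert_le (N : Matroid α) (e : α) (X : Set α) :
    N.mrk (insert e X) ≤ N.mrk X + 1 := by
  obtain ⟨J, hJ, hJe⟩ := N.exists_basis'_mrk (insert e X)
  have h1 : J \ {e} ⊆ X := by
    intro x hx
    rcases hJ.subset hx.1 with h | h
    · exact absurd h hx.2
    · exact h
  calc N.mrk (insert e X) = J.encard := hJe.symm
    _ ≤ (J \ {e}).encard + 1 := by
        rcases em (e ∈ J) with he | he
        · rw [← encard_diff_singleton_add_one he]
        · rw [diff_singleton_eq_self he]; exact le_self_add
    _ ≤ N.mrk X + 1 := by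
        gcongr
        rw [← (hJ.indep.subset (diff_subset)).mrk_eq]
        exact N.mrk_mono h1

theorem mrk_insert_of_mem_closure (h : e ∈ N.closure X) :
    N.mrk (insert e X) = N.mrk X := by
  obtain ⟨I, hI, hIe⟩ := N.exists_basis'_mrk X
  have hcl : N.closure I = N.closure X := hI.closure_eq_closure
  have hb : N.IsBasis' I (insert e X) := by
    rw [isBasis'_iff_isBasis_closure] at hI ⊢
    refine ⟨?_, hI.2.trans (subset_insert _ _)⟩
    have : N.closure (insert e X) = N.closure X := by
      rw [← closure_insert_closure_eq_closure_insert,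
        insert_eq_of_mem h, closure_closure]
    rw [this]
    exact hI.1
  rw [← hIe, hb.encard_eq_mrk]

theorem mrk_insert_of_not_mem_closure (heE : e ∈ N.E) (h : e ∉ N.closure X) :
    N.mrk (insert e X) = N.mrk X + 1 := by
  obtain ⟨I, hI, hIe⟩ := N.exists_basis'_mrk X
  have hcl : N.closure I = N.closure X := hI.closure_eq_closure
  have heI : e ∉ I := fun heI => h (hcl ▸ N.subset_closure I hI.indep.subset_ground heI)
  have hind : N.Indep (insert e I) := by
    rw [hI.indep.insert_indep_iff_of_notMem heI]
    exact ⟨heE, hcl ▸ h⟩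
  have hb : N.IsBasis' (insert e I) (insert e X) := by
    rw [isBasis'_iff_isBasis_closure]
    refine ⟨?_, insert_subset_insert hI.subset⟩
    have : N.closure (insert e I) = N.closure (insert e X) := by
      rw [← closure_insert_closure_eq_closure_insert, hcl,
        closure_insert_closure_eq_closure_insert]
    exact this ▸ hind.isBasis_closure
  rw [← hIe, ← hb.encard_eq_mrk, encard_insert_of_notMem heI]

theorem mem_closure_of_mrk_insert_eq (hX : X.Finite) (heE : e ∈ N.E)
    (h : N.mrk (insert e X) = N.mrk X) : e ∈ N.closure X := by
  by_contra hcl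
  rw [mrk_insert_of_not_mem_closure heE hcl] at h
  have ht := N.mrk_ne_top_of_finite hX
  exact absurd ((ENat.add_one_le_iff ht).1 h.le) (lt_irrefl _)

theorem mrk_submod (N : Matroid α) (hX : X ⊆ N.E) (hY : Y ⊆ N.E) :
    N.mrk (X ∪ Y) + N.mrk (X ∩ Y) ≤ N.mrk X + N.mrk Y := by
  obtain ⟨I, hI⟩ := N.exists_isBasis (X ∩ Y) ((inter_subset_left).trans hX)
  obtain ⟨J, hJ, hIJ⟩ := hI.indep.subset_isBasis_of_subset
    (hI.subset.trans ((inter_subset_left).trans subset_union_left)) (union_subset hX hY)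
  have hJXY : J ∩ (X ∩ Y) = I :=
    (hI.eq_of_subset_indep (hJ.indep.inter_right _)
      (subset_inter hIJ hI.subset) inter_subset_right).symm
  have hsplit : (J ∩ X).encard + (J ∩ Y).encard = J.encard + I.encard := by
    rw [← encard_union_add_encard_inter]
    congr 1
    · rw [← inter_union_distrib_left, inter_eq_left.2 hJ.subset]
    · rw [← hJXY]
      congr 1
      ext x
      simp only [mem_inter_iff]
      tauto
  calc N.mrk (X ∪ Y) + N.mrk (X ∩ Y) = J.encard + I.encard := by
        rw [hJ.encard_eq_mrk, hI.encard_eq_mrk]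
    _ = (J ∩ X).encard + (J ∩ Y).encard := hsplit.symm
    _ ≤ N.mrk X + N.mrk Y := by
        gcongr
        · rw [← (hJ.indep.inter_right X).mrk_eq]; exact N.mrk_mono inter_subset_right
        · rw [← (hJ.indep.inter_right Y).mrk_eq]; exact N.mrk_mono inter_subset_right

end Matroid

namespace Matroid

variable {α : Type*} {N : Matroid α} {I X Y : Set α} {e : α}

/-- The rank of a (finite) set in a matroid, as a natural number. -/
noncomputable def nrk (N : Matroid α) (X : Set α) : ℕ := (N.mrk X).toNat

theorem Indep.nrk_eq (h : N.Indep I) : N.nrk I = I.ncard := by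
  rw [nrk, h.mrk_eq, Set.ncard_def]

theorem nrk_mono (N : Matroid α) (hY : Y.Finite) (h : X ⊆ Y) : N.nrk X ≤ N.nrk Y :=
  ENat.toNat_le_toNat (N.mrk_mono h) (N.mrk_ne_top_of_finite hY)

theorem nrk_le_ncard (N : Matroid α) (hX : X.Finite) : N.nrk X ≤ X.ncard := by
  rw [nrk, Set.ncard_def]
  exact ENat.toNat_le_toNat (N.mrk_le_encard X) hX.encard_lt_top.ne

theorem nrk_insert_of_mem_closure (h : e ∈ N.closure X) :
    N.nrk (insert e X) = N.nrk X := by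
  rw [nrk, nrk, mrk_insert_of_mem_closure h]

theorem nrk_insert_of_not_mem_closure (hX : X.Finite) (heE : e ∈ N.E) (h : e ∉ N.closure X) :
    N.nrk (insert e X) = N.nrk X + 1 := by
  rw [nrk, nrk, mrk_insert_of_not_mem_closure heE h,
    ENat.toNat_add (N.mrk_ne_top_of_finite hX) (by simp)]
  rfl

theorem mem_closure_of_nrk_insert_le (hX : X.Finite) (heE : e ∈ N.E)
    (h : N.nrk (insert e X) ≤ N.nrk X) : e ∈ N.closure X := by
  by_contra hcl
  rw [nrk_insert_of_not_mem_closure hX heE hcl] at h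
  omega

theorem nrk_submod (N : Matroid α) (hX : X ⊆ N.E) (hY : Y ⊆ N.E)
    (hXf : X.Finite) (hYf : Y.Finite) :
    N.nrk (X ∪ Y) + N.nrk (X ∩ Y) ≤ N.nrk X + N.nrk Y := by
  have h := N.mrk_submod hX hY
  have h1 := N.mrk_ne_top_of_finite (hXf.union hYf)
  have h2 := N.mrk_ne_top_of_finite (hXf.inter_of_left Y)
  have h3 := N.mrk_ne_top_of_finite hXf
  have h4 := N.mrk_ne_top_of_finite hYf
  have := ENat.toNat_le_toNat h (by
    intro hc
    rcases WithTop.add_eq_top.1 hc with hc | hc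
    exacts [h3 hc, h4 hc])
  rwa [ENat.toNat_add h1 h2, ENat.toNat_add h3 h4] at this

end Matroid


/-- Alice wins the generalized modified indicated coloring game on the matroids
`M 0, …, M (k-1)` (all on the finite ground set `E`) from the partial coloring `c`;
defined by recursion on the number of uncolored elements: either every element of `E` is
colored, or both of the following hold: (i) there is an uncolored element `e ∈ E` such that
at least one color can be assigned to `e` keeping the coloring proper, and for every such
color Alice wins from the extended coloring (Alice indicates, Bob colors); and (ii) for
every uncolored element `e ∈ E` there is a color whose assignment to `e` keeps the coloring
proper and such that Alice wins from the extended coloring (Bob indicates, Alice colors). -/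
def AliceWinsMod {α : Type*} [DecidableEq α] {k : ℕ} (M : Fin k → Matroid α) (E : Set α)
    (hE : E.Finite) (c : α → Option (Fin k)) : Prop :=
  (∀ e ∈ E, c e ≠ none) ∨
    ((∃ e, ∃ _ : e ∈ E, ∃ _ : c e = none,
        (∃ j : Fin k, ProperColoring M E (Function.update c e (some j))) ∧
        ∀ j : Fin k, ProperColoring M E (Function.update c e (some j)) →
          AliceWinsMod M E hE (Function.update c e (some j))) ∧
      (∀ e, e ∈ E → c e = none →
        ∃ j : Fin k, ProperColoring M E (Function.update c e (some j)) ∧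
          AliceWinsMod M E hE (Function.update c e (some j))))
termination_by {x ∈ E | c x = none}.ncard
decreasing_by all_goals (apply uncolored_update_lt <;> assumption)

open Function Set Matroid

section Helpers

lemma ncard_iUnion_le' {β : Type*} {n : ℕ} (s : Fin n → Set β) (h : ∀ i, (s i).Finite) :
    (⋃ i, s i).ncard ≤ ∑ i, (s i).ncard := by
  induction n with
  | zero => simp
  | succ m ih =>
    rw [Fin.sum_univ_succ]
    have heq : (⋃ i, s i) = s 0 ∪ ⋃ i : Fin m, s i.succ := by
      ext x
      simp only [mem_iUnion, mem_union]
      constructor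
      · rintro ⟨i, hi⟩
        rcases Fin.eq_zero_or_eq_succ i with rfl | ⟨i', rfl⟩
        · exact Or.inl hi
        · exact Or.inr ⟨i', hi⟩
      · rintro (hx | ⟨i, hi⟩)
        exacts [⟨0, hx⟩, ⟨i.succ, hi⟩]
    rw [heq]
    have h1 := Set.ncard_union_le (s 0) (⋃ i : Fin m, s i.succ)
    have h2 := ih (fun i => s i.succ) (fun i => h i.succ)
    beta_reduce at h2
    omega

lemma sum_succ_at {k : ℕ} {f g : Fin k → ℕ} (j : Fin k) (h : ∀ j' ≠ j, f j' = g j')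
    (hj : f j = g j + 1) : ∑ j', f j' = (∑ j', g j') + 1 := by
  have h1 : ∑ x, f x = f j + ∑ x ∈ Finset.univ.erase j, f x :=
    (Finset.add_sum_erase Finset.univ f (Finset.mem_univ j)).symm
  have h2 : ∑ x, g x = g j + ∑ x ∈ Finset.univ.erase j, g x :=
    (Finset.add_sum_erase Finset.univ g (Finset.mem_univ j)).symm
  have h3 : ∑ x ∈ Finset.univ.erase j, f x = ∑ x ∈ Finset.univ.erase j, g x :=
    Finset.sum_congr rfl (fun x hx => h x (Finset.ne_of_mem_erase hx))
  omega

lemma eq_at_of_sum_le {k : ℕ} {f g : Fin k → ℕ} (hle : ∀ i, f i ≤ g i)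
    (hsum : ∑ i, g i ≤ ∑ i, f i) (j : Fin k) : g j = f j := by
  have h1 : ∑ x, f x = f j + ∑ x ∈ Finset.univ.erase j, f x :=
    (Finset.add_sum_erase Finset.univ f (Finset.mem_univ j)).symm
  have h2 : ∑ x, g x = g j + ∑ x ∈ Finset.univ.erase j, g x :=
    (Finset.add_sum_erase Finset.univ g (Finset.mem_univ j)).symm
  have h3 : ∑ i ∈ Finset.univ.erase j, f i ≤ ∑ i ∈ Finset.univ.erase j, g i :=
    Finset.sum_le_sum (fun i _ => hle i)
  have := hle j
  omega

end Helpers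

namespace IndGame

variable {α : Type*} [DecidableEq α] {k : ℕ}

/-- The set of elements colored `j`. -/
def Cset (E : Set α) (c : α → Option (Fin k)) (j : Fin k) : Set α := {x ∈ E | c x = some j}

/-- The set of uncolored elements. -/
def Uset (E : Set α) (c : α → Option (Fin k)) : Set α := {x ∈ E | c x = none}

variable {M : Fin k → Matroid α} {E : Set α} {c : α → Option (Fin k)} {e : α} {j : Fin k}

lemma Cset_subset : Cset E c j ⊆ E := sep_subset _ _
lemma Uset_subset : Uset E c ⊆ E := sep_subset _ _

lemma mem_Uset_iff : e ∈ Uset E c ↔ e ∈ E ∧ c e = none := Iff.rfl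

lemma not_mem_Cset (hce : c e = none) : e ∉ Cset E c j := by
  intro h
  rw [h.2] at hce
  exact Option.some_ne_none _ hce

lemma properColoring_iff :
    ProperColoring M E c ↔ ∀ j, (M j).Indep (Cset E c j) := Iff.rfl

lemma Cset_update_self (he : e ∈ E) :
    Cset E (Function.update c e (some j)) j = insert e (Cset E c j) := by
  ext x
  rcases eq_or_ne x e with rfl | hne
  · simp [Cset, he]
  · simp [Cset, Function.update_of_ne hne, hne]

lemma Cset_update_ne {j' : Fin k} (hce : c e = none) (hjj : j' ≠ j) :
    Cset E (Function.update c e (some j)) j' = Cset E c j' := by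
  ext x
  rcases eq_or_ne x e with rfl | hne
  · simp only [Cset, mem_setOf_eq, Function.update_self, hce]
    constructor
    · rintro ⟨hxE, h⟩
      exact absurd (Option.some_injective _ h).symm hjj
    · rintro ⟨hxE, h⟩
      exact absurd h (by simp)
  · simp [Cset, Function.update_of_ne hne]

lemma Uset_update :
    Uset E (Function.update c e (some j)) = Uset E c \ {e} := by
  ext x
  rcases eq_or_ne x e with rfl | hne
  · simp [Uset, Function.update_self]
  · simp [Uset, Function.update_of_ne hne, hne]

/-- The Hall-type condition: every set of uncolored elements has enough room. -/
def Hall (M : Fin k → Matroid α) (E : Set α) (c : α → Option (Fin k)) : Prop :=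
  ∀ X ⊆ Uset E c,
    X.ncard + ∑ j, (Cset E c j).ncard ≤ ∑ j, (M j).nrk (X ∪ Cset E c j)

/-- A tight set: one for which the Hall-type inequality is an equality. -/
def Tight (M : Fin k → Matroid α) (E : Set α) (c : α → Option (Fin k)) (X : Set α) : Prop :=
  X ⊆ Uset E c ∧
    ∑ j, (M j).nrk (X ∪ Cset E c j) = X.ncard + ∑ j, (Cset E c j).ncard

section Lemmas

variable (hE : E.Finite) (hground : ∀ i, (M i).E = E)

include hE

lemma finu : (Uset E c).Finite := hE.subset Uset_subset
lemma finc : (Cset E c j).Finite := hE.subset Cset_subset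

lemma tight_empty (hp : ProperColoring M E c) : Tight M E c ∅ := by
  refine ⟨empty_subset _, ?_⟩
  simp only [Set.empty_union, Set.ncard_empty, zero_add]
  exact Finset.sum_congr rfl (fun j _ => (hp j).nrk_eq)

include hground

lemma tight_union_inter (hall : Hall M E c) {A B : Set α}
    (hA : Tight M E c A) (hB : Tight M E c B) :
    Tight M E c (A ∪ B) ∧ Tight M E c (A ∩ B) := by
  have hAU := hA.1; have hBU := hB.1
  have hAE : A ⊆ E := hAU.trans Uset_subset
  have hBE : B ⊆ E := hBU.trans Uset_subset
  have hsub : ∀ j : Fin k,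
      (M j).nrk ((A ∪ B) ∪ Cset E c j) + (M j).nrk ((A ∩ B) ∪ Cset E c j) ≤
      (M j).nrk (A ∪ Cset E c j) + (M j).nrk (B ∪ Cset E c j) := by
    intro j
    have h1 : (A ∪ Cset E c j) ∪ (B ∪ Cset E c j) = (A ∪ B) ∪ Cset E c j := by
      ext x; simp only [mem_union]; tauto
    have h2 : (A ∪ Cset E c j) ∩ (B ∪ Cset E c j) = (A ∩ B) ∪ Cset E c j := by
      ext x; simp only [mem_union, mem_inter_iff]; tauto
    have := (M j).nrk_submod (X := A ∪ Cset E c j) (Y := B ∪ Cset E c j)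
      (by rw [hground]; exact union_subset hAE Cset_subset)
      (by rw [hground]; exact union_subset hBE Cset_subset)
      ((hE.subset hAE).union (finc hE)) ((hE.subset hBE).union (finc hE))
    rwa [h1, h2] at this
  have hsum : (∑ j, (M j).nrk ((A ∪ B) ∪ Cset E c j)) +
      (∑ j, (M j).nrk ((A ∩ B) ∪ Cset E c j)) ≤
      (∑ j, (M j).nrk (A ∪ Cset E c j)) + (∑ j, (M j).nrk (B ∪ Cset E c j)) := by
    rw [← Finset.sum_add_distrib, ← Finset.sum_add_distrib]
    exact Finset.sum_le_sum (fun j _ => hsub j)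
  have hU : (A ∪ B) ⊆ Uset E c := union_subset hAU hBU
  have hI : (A ∩ B) ⊆ Uset E c := (inter_subset_left).trans hAU
  have hallU := hall _ hU
  have hallI := hall _ hI
  have hcards : (A ∪ B).ncard + (A ∩ B).ncard = A.ncard + B.ncard :=
    Set.ncard_union_add_ncard_inter A B (hE.subset hAE) (hE.subset hBE)
  have h2A := hA.2
  have h2B := hB.2
  constructor
  · exact ⟨hU, by omega⟩
  · exact ⟨hI, by omega⟩

lemma tight_sUnion (hp : ProperColoring M E c) (hall : Hall M E c) {F : Set (Set α)}
    (hF : F.Finite) (h : ∀ X ∈ F, Tight M E c X) : Tight M E c (⋃₀ F) := by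
  refine Set.Finite.induction_on
    (motive := fun F _ => (∀ X ∈ F, Tight M E c X) → Tight M E c (⋃₀ F)) F hF ?_ ?_ h
  · intro _
    simpa using tight_empty hE hp
  · intro X F hXF hFfin ih hmem
    rw [sUnion_insert]
    exact (tight_union_inter hE hground hall (hmem X (mem_insert _ _))
      (ih fun Y hY => hmem Y (mem_insert_of_mem _ hY))).1

lemma exists_maxTight (hp : ProperColoring M E c) (hall : Hall M E c) {S : Set α}
    (hS : S ⊆ Uset E c) :
    ∃ T, Tight M E c T ∧ T ⊆ S ∧ ∀ X, Tight M E c X → X ⊆ S → X ⊆ T := by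
  refine ⟨⋃₀ {X | Tight M E c X ∧ X ⊆ S}, ?_, ?_, ?_⟩
  · exact tight_sUnion hE hground hp hall
      ((hE.subset (hS.trans Uset_subset)).finite_subsets.subset (fun X hX => hX.2))
      (fun X hX => hX.1)
  · exact sUnion_subset (fun X hX => hX.2)
  · exact fun X hX hXS => subset_sUnion_of_mem ⟨hX, hXS⟩

/-- The key one-step lemma: if Alice or Bob colors `e` with `j`, where `e` is not in the
`M j`-closure of any tight set avoiding `e` (together with the `j`-colored elements),
then properness and the Hall condition are preserved. -/
lemma hall_update (hp : ProperColoring M E c) (hall : Hall M E c)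
    (he : e ∈ E) (hce : c e = none)
    (hind : (M j).Indep (insert e (Cset E c j)))
    (hsafe : ∀ X, Tight M E c X → X ⊆ Uset E c \ {e} →
      e ∉ (M j).closure (X ∪ Cset E c j)) :
    ProperColoring M E (Function.update c e (some j)) ∧
      Hall M E (Function.update c e (some j)) := by
  set c' := Function.update c e (some j) with hc'
  have hprop : ProperColoring M E c' := by
    intro j'
    rcases eq_or_ne j' j with rfl | hjj
    · show (M j').Indep (Cset E c' j')
      rw [Cset_update_self he]
      exact hind
    · show (M j').Indep (Cset E c' j')
      rw [Cset_update_ne hce hjj]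
      exact hp j'
  refine ⟨hprop, ?_⟩
  intro X hX
  rw [Uset_update] at hX
  have hXU : X ⊆ Uset E c := hX.trans diff_subset
  have hXE : X ⊆ E := hXU.trans Uset_subset
  have heX : e ∉ X := fun h => (hX h).2 rfl
  -- cardinalities of color classes
  have hCcard : ∑ j', (Cset E c' j').ncard = (∑ j', (Cset E c j').ncard) + 1 := by
    refine sum_succ_at j (fun j' hjj => by rw [Cset_update_ne hce hjj]) ?_
    rw [Cset_update_self he, Set.ncard_insert_of_notMem (not_mem_Cset hce) (finc hE)]
  have hterm_ne : ∀ j' ≠ j, X ∪ Cset E c' j' = X ∪ Cset E c j' := by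
    intro j' hjj; rw [Cset_update_ne hce hjj]
  have hterm_j : X ∪ Cset E c' j = insert e (X ∪ Cset E c j) := by
    rw [Cset_update_self he, union_insert]
  by_cases htX : Tight M E c X
  · -- the tight case: the rank of the `j`-term goes up by one
    have hecl := hsafe X htX hX
    have hj : (M j).nrk (X ∪ Cset E c' j) = (M j).nrk (X ∪ Cset E c j) + 1 := by
      rw [hterm_j]
      exact (M j).nrk_insert_of_not_mem_closure ((hE.subset hXE).union (finc hE))
        (by rw [hground]; exact he) hecl
    have hsum : ∑ j', (M j').nrk (X ∪ Cset E c' j') =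
        (∑ j', (M j').nrk (X ∪ Cset E c j')) + 1 :=
      sum_succ_at j (fun j' hjj => by rw [hterm_ne j' hjj]) hj
    have := htX.2
    omega
  · -- the non-tight case: there is slack
    have hstrict := hall X hXU
    have hne : ∑ j', (M j').nrk (X ∪ Cset E c j') ≠
        X.ncard + ∑ j', (Cset E c j').ncard := fun h => htX ⟨hXU, h⟩
    have hsum : ∑ j', (M j').nrk (X ∪ Cset E c j') ≤
        ∑ j', (M j').nrk (X ∪ Cset E c' j') := by
      refine Finset.sum_le_sum (fun j' _ => ?_)
      rcases eq_or_ne j' j with rfl | hjj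
      · rw [hterm_j]
        exact (M j').nrk_mono (((hE.subset hXE).union (finc hE)).insert e) (subset_insert _ _)
      · rw [hterm_ne j' hjj]
    omega

/-- Bob indicates `e`; Alice can find a good color. -/
lemma respond (hp : ProperColoring M E c) (hall : Hall M E c) (heU : e ∈ Uset E c) :
    ∃ j, ProperColoring M E (Function.update c e (some j)) ∧
      Hall M E (Function.update c e (some j)) := by
  have hpc : ∀ j, (M j).Indep (Cset E c j) := hp
  obtain ⟨he, hce⟩ := id heU
  obtain ⟨T, hT, hTS, hTmax⟩ := exists_maxTight hE hground hp hall
    (S := Uset E c \ {e}) diff_subset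
  have heT : e ∉ T := fun h => (hTS h).2 rfl
  have hTE : T ⊆ E := hT.1.trans Uset_subset
  -- find a color j with e not in the closure of T ∪ C_j
  have hkey : ∃ j, e ∉ (M j).closure (T ∪ Cset E c j) := by
    by_contra hcon
    push_neg at hcon
    have h1 : insert e T ⊆ Uset E c := insert_subset heU (hT.1)
    have h2 := hall _ h1
    have h3 : ∀ j : Fin k, (M j).nrk (insert e T ∪ Cset E c j) =
        (M j).nrk (T ∪ Cset E c j) := by
      intro j
      rw [insert_union]
      exact (M j).nrk_insert_of_mem_closure (hcon j)
    rw [Finset.sum_congr rfl (fun j _ => h3 j)] at h2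
    rw [Set.ncard_insert_of_notMem heT (hE.subset hTE)] at h2
    have := hT.2
    omega
  obtain ⟨j, hecl⟩ := hkey
  have hind : (M j).Indep (insert e (Cset E c j)) := by
    rw [(hpc j).insert_indep_iff_of_notMem (not_mem_Cset hce)]
    refine ⟨by rw [hground]; exact he, fun h => hecl ?_⟩
    exact (M j).closure_subset_closure subset_union_right h
  refine ⟨j, hall_update hE hground hp hall he hce hind ?_⟩
  intro X htX hXS h
  exact hecl ((M j).closure_subset_closure (union_subset_union_left _ (hTmax X htX hXS)) h)

/-- Alice indicates a safe element `e`: whatever proper color Bob picks, all is preserved. -/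
lemma indicate (hp : ProperColoring M E c) (hall : Hall M E c)
    (hne : (Uset E c).Nonempty) :
    ∃ e ∈ Uset E c, ∀ j, (M j).Indep (insert e (Cset E c j)) →
      ProperColoring M E (Function.update c e (some j)) ∧
        Hall M E (Function.update c e (some j)) := by
  have hpc : ∀ j, (M j).Indep (Cset E c j) := hp
  by_cases hex : ∃ X, Tight M E c X ∧ X.Nonempty
  · -- take a minimal nonempty tight set T*, any of its elements is safe
    have hfam : {X | Tight M E c X ∧ X.Nonempty}.Finite :=
      ((hE.subset Uset_subset).finite_subsets).subset (fun X hX => hX.1.1)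
    obtain ⟨T, hTmem, hTmin⟩ := Set.Finite.exists_minimalFor Set.ncard _ hfam hex
    obtain ⟨hT, hTne⟩ := hTmem
    obtain ⟨e, heT⟩ := hTne
    have heU : e ∈ Uset E c := hT.1 heT
    obtain ⟨heE, hce⟩ := id heU
    have hTfin : T.Finite := hE.subset (hT.1.trans Uset_subset)
    refine ⟨e, heU, fun j hind => ?_⟩
    refine hall_update hE hground hp hall heE hce hind ?_
    intro X htX hXS hecl
    have heX : e ∉ X := fun h => (hXS h).2 rfl
    have hXfin : X.Finite := hE.subset (htX.1.trans Uset_subset)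
    -- X and T are disjoint
    have hXT : X ∩ T = ∅ := by
      by_contra hne'
      have htXT : Tight M E c (X ∩ T) := (tight_union_inter hE hground hall htX hT).2
      have hss : X ∩ T ⊂ T :=
        ⟨inter_subset_right, fun hsub => heX (hsub heT).1⟩
      have hlt : (X ∩ T).ncard < T.ncard := Set.ncard_lt_ncard hss hTfin
      have := hTmin (j := X ∩ T) ⟨htXT, nonempty_iff_ne_empty.2 hne'⟩ (le_of_lt hlt)
      omega
    have htU : Tight M E c (X ∪ T) := (tight_union_inter hE hground hall htX hT).1
    -- skewness at j
    have hskew : (M j).nrk ((X ∪ T) ∪ Cset E c j) + (Cset E c j).ncard =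
        (M j).nrk (X ∪ Cset E c j) + (M j).nrk (T ∪ Cset E c j) := by
      have hle : ∀ j' : Fin k,
          (M j').nrk ((X ∪ T) ∪ Cset E c j') + (Cset E c j').ncard ≤
          (M j').nrk (X ∪ Cset E c j') + (M j').nrk (T ∪ Cset E c j') := by
        intro j'
        have h1 : (X ∪ Cset E c j') ∪ (T ∪ Cset E c j') = (X ∪ T) ∪ Cset E c j' := by
          ext x; simp only [mem_union]; tauto
        have hsubm := (M j').nrk_submod (X := X ∪ Cset E c j') (Y := T ∪ Cset E c j')
          (by rw [hground]; exact union_subset (htX.1.trans Uset_subset) Cset_subset)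
          (by rw [hground]; exact union_subset (hT.1.trans Uset_subset) Cset_subset)
          (hXfin.union (finc hE)) (hTfin.union (finc hE))
        rw [h1] at hsubm
        have hmono : (Cset E c j').ncard ≤
            (M j').nrk ((X ∪ Cset E c j') ∩ (T ∪ Cset E c j')) := by
          rw [← (hpc j').nrk_eq]
          exact (M j').nrk_mono ((hXfin.union (finc hE)).inter_of_left _)
            (subset_inter subset_union_right subset_union_right)
        omega
      have hsums : ∑ j', ((M j').nrk (X ∪ Cset E c j') + (M j').nrk (T ∪ Cset E c j')) ≤
          ∑ j', ((M j').nrk ((X ∪ T) ∪ Cset E c j') + (Cset E c j').ncard) := by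
        rw [Finset.sum_add_distrib, Finset.sum_add_distrib, htX.2, hT.2, htU.2,
          Set.ncard_union_eq (disjoint_iff_inter_eq_empty.2 hXT) hXfin hTfin]
        omega
      exact (eq_at_of_sum_le hle hsums j).symm
    -- now derive a contradiction via submodularity
    have hsubm := (M j).nrk_submod (X := T ∪ Cset E c j) (Y := insert e (X ∪ Cset E c j))
      (by rw [hground]; exact union_subset (hT.1.trans Uset_subset) Cset_subset)
      (by rw [hground]
          exact insert_subset heE (union_subset (htX.1.trans Uset_subset) Cset_subset))
      (hTfin.union (finc hE)) ((hXfin.union (finc hE)).insert e)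
    have hAB : (T ∪ Cset E c j) ∪ insert e (X ∪ Cset E c j) = (X ∪ T) ∪ Cset E c j := by
      ext x
      simp only [mem_union, mem_insert_iff]
      constructor
      · rintro ((h | h) | rfl | h | h)
        · exact Or.inl (Or.inr h)
        · exact Or.inr h
        · exact Or.inl (Or.inr heT)
        · exact Or.inl (Or.inl h)
        · exact Or.inr h
      · rintro ((h | h) | h)
        · exact Or.inr (Or.inr (Or.inl h))
        · exact Or.inl (Or.inl h)
        · exact Or.inl (Or.inr h)
    have hAB2 : insert e (Cset E c j) ⊆ (T ∪ Cset E c j) ∩ insert e (X ∪ Cset E c j) := by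
      refine insert_subset ⟨Or.inl heT, Or.inl rfl⟩ ?_
      exact subset_inter subset_union_right
        ((subset_union_right).trans (subset_insert _ _))
    have h5 : (M j).nrk (insert e (Cset E c j)) = (Cset E c j).ncard + 1 := by
      rw [hind.nrk_eq, Set.ncard_insert_of_notMem (not_mem_Cset hce) (finc hE)]
    have h6 : (Cset E c j).ncard + 1 ≤
        (M j).nrk ((T ∪ Cset E c j) ∩ insert e (X ∪ Cset E c j)) := by
      rw [← h5]
      exact (M j).nrk_mono ((hTfin.union (finc hE)).inter_of_left _) hAB2
    have h7 : (M j).nrk (insert e (X ∪ Cset E c j)) = (M j).nrk (X ∪ Cset E c j) :=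
      (M j).nrk_insert_of_mem_closure hecl
    rw [hAB, h7] at hsubm
    omega
  · -- no nonempty tight set: every uncolored element is safe
    obtain ⟨e, heU⟩ := hne
    obtain ⟨heE, hce⟩ := id heU
    refine ⟨e, heU, fun j hind => ?_⟩
    refine hall_update hE hground hp hall heE hce hind ?_
    intro X htX hXS hecl
    have hX0 : X = ∅ := by
      by_contra h
      exact hex ⟨X, htX, nonempty_iff_ne_empty.2 h⟩
    rw [hX0, empty_union] at hecl
    have := ((hpc j).insert_indep_iff_of_notMem (not_mem_Cset hce)).1 hind
    exact this.2 hecl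

end Lemmas

section InitAndMain

variable (hE : E.Finite) (hground : ∀ i, (M i).E = E)

lemma proper_init : ProperColoring M E (fun _ => none) := by
  intro j
  have h : {x ∈ E | (fun _ => (none : Option (Fin k))) x = some j} = (∅ : Set α) := by
    ext x; simp
  show (M j).Indep {x ∈ E | (fun _ => (none : Option (Fin k))) x = some j}
  rw [h]
  exact (M j).empty_indep

include hE in
lemma hall_init {V : Fin k → Set α} (hV : ∀ i, (M i).Indep (V i)) (hcover : ⋃ i, V i = E) :
    Hall M E (fun _ => none) := by
  intro X hX
  have hXE : X ⊆ E := hX.trans Uset_subset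
  have hXfin : X.Finite := hE.subset hXE
  have hC0 : ∀ j : Fin k, Cset E (fun _ => (none : Option (Fin k))) j = ∅ := fun j => by
    ext x; simp [Cset]
  calc X.ncard + ∑ j, (Cset E (fun _ => (none : Option (Fin k))) j).ncard
      = X.ncard := by simp [hC0]
    _ = (⋃ j, X ∩ V j).ncard := by rw [← inter_iUnion, hcover, inter_eq_left.2 hXE]
    _ ≤ ∑ j, (X ∩ V j).ncard := ncard_iUnion_le' _ (fun j => hXfin.inter_of_left _)
    _ ≤ ∑ j, (M j).nrk (X ∪ Cset E (fun _ => (none : Option (Fin k))) j) := by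
        refine Finset.sum_le_sum fun j _ => ?_
        rw [hC0 j, union_empty, ← ((hV j).subset inter_subset_right).nrk_eq]
        exact (M j).nrk_mono hXfin inter_subset_left

include hE hground in
lemma alice_wins_of_hall :
    ∀ (n : ℕ) (c : α → Option (Fin k)), (Uset E c).ncard ≤ n →
      ProperColoring M E c → Hall M E c → AliceWinsMod M E hE c := by
  intro n
  induction n with
  | zero =>
    intro c hc hp hh
    rw [AliceWinsMod]
    left
    intro e heE hene
    have h0 : Uset E c = ∅ := (Set.ncard_eq_zero (finu hE)).1 (Nat.le_zero.1 hc)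
    have : e ∈ Uset E c := ⟨heE, hene⟩
    rw [h0] at this
    exact this
  | succ n ih =>
    intro c hc hp hh
    rcases eq_empty_or_nonempty (Uset E c) with h0 | hne
    · rw [AliceWinsMod]
      left
      intro e heE hene
      have : e ∈ Uset E c := ⟨heE, hene⟩
      rw [h0] at this
      exact this
    · rw [AliceWinsMod]
      right
      have hdec : ∀ (e : α), e ∈ E → c e = none → ∀ j : Fin k,
          (Uset E (Function.update c e (some j))).ncard ≤ n := by
        intro e heE hce j
        have hlt : (Uset E (Function.update c e (some j))).ncard < (Uset E c).ncard :=
          uncolored_update_lt hE heE hce j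
        omega
      constructor
      · obtain ⟨e, heU, hsafe⟩ := indicate hE hground hp hh hne
        obtain ⟨heE, hce⟩ := id heU
        obtain ⟨j0, hp0', hh0'⟩ := respond hE hground hp hh heU
        refine ⟨e, heE, hce, ⟨j0, hp0'⟩, ?_⟩
        intro j hpj
        have hind : (M j).Indep (insert e (Cset E c j)) := by
          have h1 := hpj j
          have h2 : {x ∈ E | Function.update c e (some j) x = some j} =
              Cset E (Function.update c e (some j)) j := rfl
          rw [h2, Cset_update_self heE] at h1
          exact h1
        obtain ⟨hp', hh'⟩ := hsafe j hind
        exact ih _ (hdec e heE hce j) hp' hh'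
      · intro e heE hce
        obtain ⟨j, hp', hh'⟩ := respond hE hground hp hh ⟨heE, hce⟩
        exact ⟨j, hp', ih _ (hdec e heE hce j) hp' hh'⟩

end InitAndMain

end IndGame

/-- If `E` is covered by sets `V i` independent in the respective matroids `M i`, then Alice
wins the generalized modified indicated coloring game from the everywhere-uncolored
position. -/
theorem aliceWinsMod_of_cover {α : Type*} [DecidableEq α] {k : ℕ} (M : Fin k → Matroid α)
    (E : Set α) (hE : E.Finite) (hground : ∀ i, (M i).E = E)
    (V : Fin k → Set α) (hV : ∀ i, (M i).Indep (V i)) (hcover : ⋃ i, V i = E) :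
    AliceWinsMod M E hE (fun _ => none) := by
  exact IndGame.alice_wins_of_hall hE hground _ _ le_rfl
    IndGame.proper_init (IndGame.hall_init hE hV hcover)
end
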